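/- Fix μ ∈ [0,1), W > 0, ν ≥ 0 and λ ∈ (0,1), and set λ̄ = 1 − λ. For t > 0 let G(t) = (1 + λ·t^ν/W)^W − 1. Then as t → ∞, the ratio [ log₂( 1 + t·( 1 + t + (1 + t + λ̄·t^μ)·G(t) ) / ( (1 + t + λ̄·t^μ)·G(t) + (1 + t)·(1 + λ̄·t^μ) ) ) + log₂(1 + λ̄·t) ] / log₂(1 + t) converges to min{2, 2 + W·ν − μ}. -/

import Mathlib

open Filter

namespace CCMuxAux
open Real

lemma rpow_neg_lim (a : ℝ) (ha : 0 ≤ a) :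
    Tendsto (fun t : ℝ => t ^ (-a)) atTop (nhds (if a = 0 then 1 else 0)) := by
  rcases eq_or_lt_of_le ha with h | h
  · simp [← h]
  · rw [if_neg h.ne']
    exact tendsto_rpow_neg_atTop h

lemma log_ratio_lim : Tendsto (fun t : ℝ => Real.log t / Real.log (1 + t)) atTop (nhds 1) := by
  have h1 : Tendsto (fun t : ℝ => Real.log (1 + t) - Real.log t) atTop (nhds 0) := by
    have : Tendsto (fun t : ℝ => Real.log (1 + 1/t)) atTop (nhds 0) := by
      have hb : Tendsto (fun t : ℝ => 1 + 1/t) atTop (nhds 1) := by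
        simpa using (tendsto_const_nhds.add
          (tendsto_inv_atTop_zero : Tendsto (fun t:ℝ => t⁻¹) atTop (nhds 0)))
      have := ((Real.continuousAt_log (by norm_num : (1:ℝ) ≠ 0)).tendsto).comp hb
      simpa [Function.comp_def] using this
    refine this.congr' ?_
    filter_upwards [eventually_gt_atTop 0] with t ht
    rw [← Real.log_div (by positivity) (ne_of_gt ht)]
    congr 1
    field_simp
    ring
  have h2 : Tendsto (fun t : ℝ => (Real.log (1 + t))⁻¹) atTop (nhds 0) := by
    have : Tendsto (fun t : ℝ => Real.log (1 + t)) atTop atTop :=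
      Real.tendsto_log_atTop.comp (tendsto_atTop_add_const_left _ _ tendsto_id)
    exact this.inv_tendsto_atTop
  have h3 : Tendsto (fun t : ℝ => 1 - (Real.log (1 + t) - Real.log t) * (Real.log (1 + t))⁻¹)
      atTop (nhds 1) := by
    have := h1.mul h2
    simpa using (tendsto_const_nhds.sub this)
  refine h3.congr' ?_
  filter_upwards [eventually_gt_atTop 1] with t ht
  have hlt : 0 < Real.log (1 + t) := Real.log_pos (by linarith)
  field_simp
  ring

lemma logb_ratio_of_pow (f : ℝ → ℝ) (e L : ℝ) (hL : 0 < L)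
    (h : Tendsto (fun t => f t / t ^ e) atTop (nhds L)) :
    Tendsto (fun t => Real.logb 2 (f t) / Real.logb 2 (1 + t)) atTop (nhds e) := by
  have hlog2 : Real.log 2 ≠ 0 := by
    have := Real.log_pos (by norm_num : (1:ℝ) < 2); linarith
  have heq : ∀ t : ℝ, Real.logb 2 (f t) / Real.logb 2 (1 + t)
      = Real.log (f t) / Real.log (1 + t) := by
    intro t
    rw [Real.logb, Real.logb]; field_simp
  simp only [heq]
  have hfpos : ∀ᶠ t : ℝ in atTop, 0 < f t / t ^ e :=
    h.eventually (eventually_gt_nhds hL)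
  have hinv : Tendsto (fun t : ℝ => (Real.log (1 + t))⁻¹) atTop (nhds 0) := by
    have : Tendsto (fun t : ℝ => Real.log (1 + t)) atTop atTop :=
      Real.tendsto_log_atTop.comp (tendsto_atTop_add_const_left _ _ tendsto_id)
    exact this.inv_tendsto_atTop
  have hlogq : Tendsto (fun t => Real.log (f t / t ^ e)) atTop (nhds (Real.log L)) :=
    ((Real.continuousAt_log hL.ne').tendsto).comp h
  have hmain : Tendsto (fun t => Real.log (f t / t ^ e) * (Real.log (1 + t))⁻¹
      + e * (Real.log t / Real.log (1 + t))) atTop (nhds e) := by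
    have := (hlogq.mul hinv).add ((tendsto_const_nhds.mul log_ratio_lim) :
      Tendsto (fun t : ℝ => e * (Real.log t / Real.log (1 + t))) atTop (nhds (e * 1)))
    simpa using this
  refine hmain.congr' ?_
  filter_upwards [hfpos, eventually_gt_atTop 1] with t hf ht
  have ht0 : 0 < t := by linarith
  have htp : (0:ℝ) < t ^ e := Real.rpow_pos_of_pos ht0 e
  have hft : 0 < f t := by
    have := mul_pos hf htp
    rwa [div_mul_cancel₀] at this
    exact htp.ne'
  rw [Real.log_div hft.ne' htp.ne', Real.log_rpow ht0]
  field_simp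
  ring

lemma G_lim (ν W lam : ℝ) (hW : 0 < W) (hν : 0 ≤ ν) (hlam0 : 0 < lam) :
    Tendsto (fun t : ℝ => ((1 + lam * t ^ ν / W) ^ W - 1) / t ^ (W * ν)) atTop
      (nhds (((if ν = 0 then (1:ℝ) else 0) + lam / W) ^ W - (if ν = 0 then (1:ℝ) else 0))) := by
  have hWν : W * ν = 0 ↔ ν = 0 := by
    constructor
    · intro h; rcases mul_eq_zero.1 h with h | h
      · exact absurd h hW.ne'
      · exact h
    · intro h; rw [h, mul_zero]
  have hbase : Tendsto (fun t : ℝ => t ^ (-ν) + lam / W) atTop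
      (nhds ((if ν = 0 then (1:ℝ) else 0) + lam / W)) :=
    (rpow_neg_lim ν hν).add tendsto_const_nhds
  have hbpos : (0:ℝ) < (if ν = 0 then (1:ℝ) else 0) + lam / W := by
    have : (0:ℝ) ≤ if ν = 0 then (1:ℝ) else 0 := by split <;> norm_num
    have := div_pos hlam0 hW
    positivity
  have hpow : Tendsto (fun t : ℝ => (t ^ (-ν) + lam / W) ^ W) atTop
      (nhds (((if ν = 0 then (1:ℝ) else 0) + lam / W) ^ W)) :=
    hbase.rpow_const (Or.inl hbpos.ne')
  have hsec : Tendsto (fun t : ℝ => t ^ (-(W * ν))) atTop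
      (nhds (if ν = 0 then (1:ℝ) else 0)) := by
    have := rpow_neg_lim (W * ν) (by positivity)
    simpa [hWν] using this
  have hlim := hpow.sub hsec
  refine hlim.congr' ?_
  filter_upwards [eventually_gt_atTop 1] with t ht
  have ht0 : 0 < t := by linarith
  have key : 1 + lam * t ^ ν / W = t ^ ν * (t ^ (-ν) + lam / W) := by
    rw [mul_add, ← Real.rpow_add ht0]
    simp
    ring
  rw [key, Real.mul_rpow (le_of_lt (Real.rpow_pos_of_pos ht0 ν)) (by positivity),
    ← Real.rpow_mul ht0.le]
  have hne : (t : ℝ) ^ (W * ν) ≠ 0 := (Real.rpow_pos_of_pos ht0 _).ne'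
  rw [Real.rpow_neg ht0.le, mul_comm ν W]
  field_simp
  rw [sub_mul, ← Real.rpow_add ht0]
  simp [mul_comm]

noncomputable def dd (ν : ℝ) : ℝ := if ν = 0 then 1 else 0
noncomputable def KK (ν W lam : ℝ) : ℝ := (dd ν + lam / W) ^ W - dd ν

lemma G_lim' (ν W lam : ℝ) (hW : 0 < W) (hν : 0 ≤ ν) (hlam0 : 0 < lam) :
    Tendsto (fun t : ℝ => ((1 + lam * t ^ ν / W) ^ W - 1) / t ^ (W * ν)) atTop
      (nhds (KK ν W lam)) := by
  simpa [KK, dd] using G_lim ν W lam hW hν hlam0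

lemma dsec (ν W : ℝ) (hW : 0 < W) (hν : 0 ≤ ν) :
    Tendsto (fun t : ℝ => t ^ (-(W * ν))) atTop (nhds (dd ν)) := by
  have hWν : W * ν = 0 ↔ ν = 0 := by
    constructor
    · intro h; rcases mul_eq_zero.1 h with h | h
      · exact absurd h hW.ne'
      · exact h
    · intro h; rw [h, mul_zero]
  have := rpow_neg_lim (W * ν) (by positivity)
  simpa [hWν, dd] using this

lemma A_lim (μ ν W lam : ℝ) (hμ0 : 0 ≤ μ) (hμ1 : μ < 1) (hW : 0 < W) (hν : 0 ≤ ν)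
    (hlam0 : 0 < lam) (hlam1 : lam < 1) :
    Tendsto (fun t : ℝ => (1 + t + (1 + t + (1 - lam) * t ^ μ) *
        ((1 + lam * t ^ ν / W) ^ W - 1)) / t ^ (1 + W * ν)) atTop
      (nhds (dd ν + KK ν W lam)) := by
  have h1 : Tendsto (fun t : ℝ => t ^ (-(1 + W * ν))) atTop (nhds 0) :=
    tendsto_rpow_neg_atTop (by positivity)
  have h2 : Tendsto (fun t : ℝ => t⁻¹) atTop (nhds 0) := tendsto_inv_atTop_zero
  have h3 : Tendsto (fun t : ℝ => t ^ (μ - 1)) atTop (nhds 0) := by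
    simpa [neg_sub] using tendsto_rpow_neg_atTop (by linarith : (0:ℝ) < 1 - μ)
  have hcomb := (h1.add (dsec ν W hW hν)).add
    (((h2.add (tendsto_const_nhds : Tendsto (fun _ : ℝ => (1:ℝ)) atTop (nhds 1))).add
      ((tendsto_const_nhds : Tendsto (fun _ : ℝ => (1 - lam)) atTop (nhds (1 - lam))).mul h3)).mul
      (G_lim' ν W lam hW hν hlam0))
  rw [show (0:ℝ) + dd ν + (0 + 1 + (1 - lam) * 0) * KK ν W lam = dd ν + KK ν W lam by ring] at hcomb
  refine hcomb.congr' ?_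
  filter_upwards [eventually_gt_atTop 1] with t ht
  have ht0 : 0 < t := by linarith
  have hne : t ^ (W * ν) ≠ 0 := (Real.rpow_pos_of_pos ht0 _).ne'
  have e1 : t ^ ((1:ℝ) + W * ν) = t * t ^ (W * ν) := by
    rw [Real.rpow_add ht0, Real.rpow_one]
  have e3 : t ^ (-((1:ℝ) + W * ν)) = (t * t ^ (W * ν))⁻¹ := by
    rw [Real.rpow_neg ht0.le, e1]
  have e2 : t ^ (-(W * ν)) = (t ^ (W * ν))⁻¹ := Real.rpow_neg ht0.le _
  have e4 : t ^ (μ - (1:ℝ)) = t ^ μ / t := by rw [Real.rpow_sub ht0, Real.rpow_one]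
  rw [e3, e2, e4, e1]
  field_simp

lemma B_lim (μ ν W lam : ℝ) (hμ0 : 0 ≤ μ) (hμ1 : μ < 1) (hW : 0 < W) (hν : 0 ≤ ν)
    (hlam0 : 0 < lam) (hlam1 : lam < 1) :
    Tendsto (fun t : ℝ => ((1 + t + (1 - lam) * t ^ μ) * ((1 + lam * t ^ ν / W) ^ W - 1) +
        (1 + t) * (1 + (1 - lam) * t ^ μ)) / t ^ (1 + max μ (W * ν))) atTop
      (nhds (KK ν W lam * (if max μ (W * ν) - W * ν = 0 then 1 else 0)
        + (if max μ (W * ν) = 0 then 1 else 0)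
        + (1 - lam) * (if max μ (W * ν) - μ = 0 then 1 else 0))) := by
  set m := max μ (W * ν) with hm
  have hm0 : 0 ≤ m := le_trans hμ0 (le_max_left _ _)
  have h2 : Tendsto (fun t : ℝ => t⁻¹) atTop (nhds 0) := tendsto_inv_atTop_zero
  have h3 : Tendsto (fun t : ℝ => t ^ (μ - 1)) atTop (nhds 0) := by
    simpa [neg_sub] using tendsto_rpow_neg_atTop (by linarith : (0:ℝ) < 1 - μ)
  have hd1 := rpow_neg_lim (m - W * ν) (sub_nonneg.2 (le_max_right _ _))
  have hd2 := rpow_neg_lim m hm0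
  have hd3 := rpow_neg_lim (m - μ) (sub_nonneg.2 (le_max_left _ _))
  have h1m : Tendsto (fun t : ℝ => t ^ (-(1 + m))) atTop (nhds 0) :=
    tendsto_rpow_neg_atTop (by linarith)
  have hcomb := (((((h2.add (tendsto_const_nhds : Tendsto (fun _ : ℝ => (1:ℝ)) atTop (nhds 1))).add
      ((tendsto_const_nhds : Tendsto (fun _ : ℝ => (1 - lam)) atTop (nhds (1 - lam))).mul h3)).mul
      (G_lim' ν W lam hW hν hlam0)).mul hd1).add (h1m.add hd2)).add
    ((((h2.add (tendsto_const_nhds : Tendsto (fun _ : ℝ => (1:ℝ)) atTop (nhds 1))).mul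
      (tendsto_const_nhds : Tendsto (fun _ : ℝ => (1 - lam)) atTop (nhds (1 - lam)))).mul hd3))
  rw [show (0 + 1 + (1 - lam) * 0) * KK ν W lam * (if m - W * ν = 0 then (1:ℝ) else 0)
      + (0 + (if m = 0 then (1:ℝ) else 0))
      + (0 + 1) * (1 - lam) * (if m - μ = 0 then (1:ℝ) else 0)
      = KK ν W lam * (if m - W * ν = 0 then 1 else 0) + (if m = 0 then 1 else 0)
        + (1 - lam) * (if m - μ = 0 then 1 else 0) by ring] at hcomb
  refine hcomb.congr' ?_
  filter_upwards [eventually_gt_atTop 1] with t ht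
  have ht0 : 0 < t := by linarith
  have hne : t ^ (W * ν) ≠ 0 := (Real.rpow_pos_of_pos ht0 _).ne'
  have hnem : t ^ m ≠ 0 := (Real.rpow_pos_of_pos ht0 _).ne'
  have hneμ : t ^ μ ≠ 0 := (Real.rpow_pos_of_pos ht0 _).ne'
  have e1 : t ^ ((1:ℝ) + m) = t * t ^ m := by rw [Real.rpow_add ht0, Real.rpow_one]
  have e3 : t ^ (-((1:ℝ) + m)) = (t * t ^ m)⁻¹ := by rw [Real.rpow_neg ht0.le, e1]
  have e2 : t ^ (-m) = (t ^ m)⁻¹ := Real.rpow_neg ht0.le _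
  have e4 : t ^ (μ - (1:ℝ)) = t ^ μ / t := by rw [Real.rpow_sub ht0, Real.rpow_one]
  have e5 : t ^ (-(m - W * ν)) = (t ^ m / t ^ (W * ν))⁻¹ := by
    rw [Real.rpow_neg ht0.le, Real.rpow_sub ht0]
  have e6 : t ^ (-(m - μ)) = (t ^ m / t ^ μ)⁻¹ := by
    rw [Real.rpow_neg ht0.le, Real.rpow_sub ht0]
  rw [e3, e2, e4, e5, e6, e1]
  field_simp
  ring

end CCMuxAux

open CCMuxAux Real in

/-- Asymptotic multiplexing gain of compress-and-cancel in the weak interference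
regime: with `SNR1 = SNR2 = t`, `INR = t^μ`, `SNR_side = t^ν`, `0 ≤ μ < 1`, and
`G(t) = (1 + λ·t^ν/W)^W − 1`, the normalized sum-rate converges to
`min{2, 2 + Wν − μ}`. -/
theorem cc_mux_gain_weak (μ ν W lam : ℝ)
    (hμ0 : 0 ≤ μ) (hμ1 : μ < 1) (hW : 0 < W) (hν : 0 ≤ ν)
    (hlam0 : 0 < lam) (hlam1 : lam < 1) :
    Tendsto
      (fun t : ℝ =>
        (Real.logb 2
            (1 + t * (1 + t + (1 + t + (1 - lam) * t ^ μ) *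
                ((1 + lam * t ^ ν / W) ^ W - 1)) /
              ((1 + t + (1 - lam) * t ^ μ) * ((1 + lam * t ^ ν / W) ^ W - 1) +
                (1 + t) * (1 + (1 - lam) * t ^ μ))) +
          Real.logb 2 (1 + (1 - lam) * t)) /
          Real.logb 2 (1 + t))
      atTop (nhds (min 2 (2 + W * ν - μ))) := by
  have hK : 0 < KK ν W lam := by
    by_cases h : ν = 0
    · have h1 : (1:ℝ) < (1 + lam / W) ^ W := by
        rw [Real.one_lt_rpow_iff_of_pos (by positivity)]
        exact Or.inl ⟨by nlinarith [div_pos hlam0 hW], hW⟩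
      simp only [KK, dd, if_pos h]
      linarith
    · simp only [KK, dd, if_neg h]
      have := Real.rpow_pos_of_pos (div_pos hlam0 hW) W
      simpa using this
  have hd1 : (0:ℝ) ≤ if max μ (W * ν) - W * ν = 0 then (1:ℝ) else 0 := by split <;> norm_num
  have hd2 : (0:ℝ) ≤ if max μ (W * ν) = 0 then (1:ℝ) else 0 := by split <;> norm_num
  have hd3 : (0:ℝ) ≤ if max μ (W * ν) - μ = 0 then (1:ℝ) else 0 := by split <;> norm_num
  have hlb : 0 < 1 - lam := by linarith
  have hLB : 0 < KK ν W lam * (if max μ (W * ν) - W * ν = 0 then (1:ℝ) else 0)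
        + (if max μ (W * ν) = 0 then (1:ℝ) else 0)
        + (1 - lam) * (if max μ (W * ν) - μ = 0 then (1:ℝ) else 0) := by
    rcases le_total μ (W * ν) with h | h
    · have h1 : max μ (W * ν) - W * ν = 0 := by rw [max_eq_right h]; ring
      rw [if_pos h1]
      nlinarith
    · have h1 : max μ (W * ν) - μ = 0 := by rw [max_eq_left h]; ring
      rw [if_pos h1]
      nlinarith
  set e : ℝ := 1 + min μ (W * ν) - μ with he_def
  have he : 0 < e := by
    have : 0 ≤ min μ (W * ν) := le_min hμ0 (mul_nonneg hW.le hν)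
    rw [he_def]; linarith
  have hsum : min μ (W * ν) + max μ (W * ν) = μ + W * ν := min_add_max _ _
  -- first term
  have hf1 : Tendsto (fun t : ℝ =>
      (1 + t * (1 + t + (1 + t + (1 - lam) * t ^ μ) * ((1 + lam * t ^ ν / W) ^ W - 1)) /
        ((1 + t + (1 - lam) * t ^ μ) * ((1 + lam * t ^ ν / W) ^ W - 1) +
          (1 + t) * (1 + (1 - lam) * t ^ μ))) / t ^ e) atTop
      (nhds (0 + (dd ν + KK ν W lam) /
        (KK ν W lam * (if max μ (W * ν) - W * ν = 0 then (1:ℝ) else 0)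
          + (if max μ (W * ν) = 0 then (1:ℝ) else 0)
          + (1 - lam) * (if max μ (W * ν) - μ = 0 then (1:ℝ) else 0)))) := by
    have hq := (A_lim μ ν W lam hμ0 hμ1 hW hν hlam0 hlam1).div
      (B_lim μ ν W lam hμ0 hμ1 hW hν hlam0 hlam1) hLB.ne'
    have hc := (tendsto_rpow_neg_atTop he).add hq
    refine hc.congr' ?_
    filter_upwards [eventually_gt_atTop 1] with t ht
    simp only [Pi.div_apply]
    have ht0 : 0 < t := by linarith
    set G := (1 + lam * t ^ ν / W) ^ W - 1 with hGdef
    have hG : 0 ≤ G := by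
      have hb : (0:ℝ) < lam * t ^ ν / W := by
        have := Real.rpow_pos_of_pos ht0 ν; positivity
      have : (1:ℝ) ≤ (1 + lam * t ^ ν / W) ^ W :=
        Real.one_le_rpow (by linarith) hW.le
      rw [hGdef]; linarith
    set A := 1 + t + (1 + t + (1 - lam) * t ^ μ) * G with hAdef
    set B := (1 + t + (1 - lam) * t ^ μ) * G + (1 + t) * (1 + (1 - lam) * t ^ μ) with hBdef
    have hBpos : 0 < B := by
      have h1 : (0:ℝ) < 1 + t + (1 - lam) * t ^ μ := by positivity
      have h2 : (0:ℝ) < (1 + t) * (1 + (1 - lam) * t ^ μ) := by positivity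
      rw [hBdef]; nlinarith
    set x := t ^ ((1:ℝ) + W * ν) with hxdef
    set y := t ^ ((1:ℝ) + max μ (W * ν)) with hydef
    have hne1 : x ≠ 0 := by rw [hxdef]; exact (Real.rpow_pos_of_pos ht0 _).ne'
    have hnem : y ≠ 0 := by rw [hydef]; exact (Real.rpow_pos_of_pos ht0 _).ne'
    have hnee : t ^ e ≠ 0 := (Real.rpow_pos_of_pos ht0 _).ne'
    have hkey' : x / y = t ^ e / t := by
      rw [hxdef, hydef, ← Real.rpow_sub ht0]
      have h9 : (1:ℝ) + W * ν - (1 + max μ (W * ν)) = e - 1 := by rw [he_def]; linarith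
      rw [h9, Real.rpow_sub ht0, Real.rpow_one]
    rw [div_div_div_comm, hkey', Real.rpow_neg ht0.le]
    rw [div_div_eq_mul_div]
    field_simp
  rw [zero_add] at hf1
  have hL1 : 0 < (dd ν + KK ν W lam) /
      (KK ν W lam * (if max μ (W * ν) - W * ν = 0 then (1:ℝ) else 0)
        + (if max μ (W * ν) = 0 then (1:ℝ) else 0)
        + (1 - lam) * (if max μ (W * ν) - μ = 0 then (1:ℝ) else 0)) := by
    apply div_pos _ hLB
    have : (0:ℝ) ≤ dd ν := by unfold dd; split <;> norm_num
    linarith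
  have hT1 := logb_ratio_of_pow _ e _ hL1 hf1
  have hf2 : Tendsto (fun t : ℝ => (1 + (1 - lam) * t) / t ^ (1:ℝ)) atTop (nhds (1 - lam)) := by
    have hc := (tendsto_inv_atTop_zero : Tendsto (fun t : ℝ => t⁻¹) atTop (nhds 0)).add
      (tendsto_const_nhds : Tendsto (fun _ : ℝ => (1 - lam)) atTop (nhds (1 - lam)))
    rw [zero_add] at hc
    refine hc.congr' ?_
    filter_upwards [eventually_gt_atTop 0] with t ht
    rw [Real.rpow_one]
    field_simp
  have hT2 := logb_ratio_of_pow (fun t : ℝ => 1 + (1 - lam) * t) 1 (1 - lam) hlb hf2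
  have final := hT1.add hT2
  have hval : e + 1 = min 2 (2 + W * ν - μ) := by
    rcases le_total μ (W * ν) with h | h
    · have h2 : min μ (W * ν) = μ := min_eq_left h
      rw [min_eq_left (show (2:ℝ) ≤ 2 + W * ν - μ by linarith), he_def, h2]; ring
    · have h2 : min μ (W * ν) = W * ν := min_eq_right h
      rw [min_eq_right (show (2:ℝ) + W * ν - μ ≤ 2 by linarith), he_def, h2]; ring
  rw [← hval]
  refine final.congr ?_
  intro t
  simp [add_div]
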